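/- The tetrahedron with vertices (1/2, 1/2, 1/2), (1/2, −1/2, 1/2), (1,0,0), (1,0,1/2) has volume 1/24 and second moment about its centroid equal to 1/512. -/

import Mathlib

open MeasureTheory Set

lemma ipoly (u c0 c1 c2 c3 c4 : ℝ) :
    (∫ t in (0:ℝ)..u, (c0 + c1*t + c2*t^2 + c3*t^3 + c4*t^4)) =
      c0*u + c1*u^2/2 + c2*u^3/3 + c3*u^4/4 + c4*u^5/5 := by
  have h : ∀ t : ℝ, HasDerivAt (fun t : ℝ => c0*t + c1*t^2/2 + c2*t^3/3 + c3*t^4/4 + c4*t^5/5)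
      (c0 + c1*t + c2*t^2 + c3*t^3 + c4*t^4) t := by
    intro t
    have h1 : HasDerivAt (fun t : ℝ => c0*t) c0 t := by
      simpa using (hasDerivAt_id t).const_mul c0
    have h2 : HasDerivAt (fun t : ℝ => c1*t^2/2) (c1*t) t := by
      have := ((hasDerivAt_pow 2 t).const_mul c1).div_const 2
      refine this.congr_deriv ?_; push_cast; ring
    have h3 : HasDerivAt (fun t : ℝ => c2*t^3/3) (c2*t^2) t := by
      have := ((hasDerivAt_pow 3 t).const_mul c2).div_const 3
      refine this.congr_deriv ?_; push_cast; ring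
    have h4 : HasDerivAt (fun t : ℝ => c3*t^4/4) (c3*t^3) t := by
      have := ((hasDerivAt_pow 4 t).const_mul c3).div_const 4
      refine this.congr_deriv ?_; push_cast; ring
    have h5 : HasDerivAt (fun t : ℝ => c4*t^5/5) (c4*t^4) t := by
      have := ((hasDerivAt_pow 5 t).const_mul c4).div_const 5
      refine this.congr_deriv ?_; push_cast; ring
    exact (((h1.add h2).add h3).add h4).add h5
  have hc : Continuous fun t : ℝ => c0 + c1*t + c2*t^2 + c3*t^3 + c4*t^4 := by fun_prop
  rw [intervalIntegral.integral_eq_sub_of_hasDerivAt (fun t _ => h t) (hc.intervalIntegrable 0 u)]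
  ring

lemma slice1 (c : ℝ) (hc : 0 ≤ c) (h : ℝ → ℝ) :
    (∫ t in Icc (0:ℝ) c, h t) = ∫ t in (0:ℝ)..c, h t := by
  rw [integral_Icc_eq_integral_Ioc, intervalIntegral.integral_of_le hc]

lemma L2 (h : ℝ × ℝ → ℝ) (hh : Continuous h) (c : ℝ) (hc : 0 ≤ c) :
    (∫ p in {p : ℝ × ℝ | 0 ≤ p.1 ∧ 0 ≤ p.2 ∧ p.1 + p.2 ≤ c}, h p)
      = ∫ a in (0:ℝ)..c, ∫ b in (0:ℝ)..(c-a), h (a, b) := by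
  set V : Set (ℝ × ℝ) := {p : ℝ × ℝ | 0 ≤ p.1 ∧ 0 ≤ p.2 ∧ p.1 + p.2 ≤ c} with hV
  have hVcl : IsClosed V := by
    have : V = {p : ℝ × ℝ | 0 ≤ p.1} ∩ ({p : ℝ × ℝ | 0 ≤ p.2} ∩ {p : ℝ × ℝ | p.1 + p.2 ≤ c}) := by
      ext p; simp [hV, and_assoc]
    rw [this]
    exact (isClosed_le continuous_const continuous_fst).inter
      ((isClosed_le continuous_const continuous_snd).inter
        (isClosed_le (continuous_fst.add continuous_snd) continuous_const))
  have hVm : MeasurableSet V := hVcl.measurableSet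
  have hVc : IsCompact V := by
    refine (isCompact_Icc (a := ((0:ℝ),(0:ℝ))) (b := (c,c))).of_isClosed_subset hVcl ?_
    rintro ⟨x, y⟩ ⟨h1, h2, h3⟩
    exact ⟨⟨h1, h2⟩, ⟨by linarith, by linarith⟩⟩
  have hint : IntegrableOn h V := hh.continuousOn.integrableOn_compact hVc
  rw [← integral_indicator hVm]
  have : (∫ p : ℝ × ℝ, V.indicator h p) = ∫ x : ℝ, ∫ y : ℝ, V.indicator h (x, y) :=
    MeasureTheory.integral_prod _ ((integrable_indicator_iff hVm).2 hint)
  rw [this]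
  have hslice : ∀ x : ℝ, (∫ y : ℝ, V.indicator h (x, y))
      = ∫ y in {y : ℝ | 0 ≤ x ∧ 0 ≤ y ∧ x + y ≤ c}, h (x, y) := by
    intro x
    have hset : MeasurableSet {y : ℝ | 0 ≤ x ∧ 0 ≤ y ∧ x + y ≤ c} := by
      by_cases hx : 0 ≤ x
      · have : {y : ℝ | 0 ≤ x ∧ 0 ≤ y ∧ x + y ≤ c} = Icc 0 (c - x) := by
          ext y; simp [hx]; intro _; constructor <;> intro <;> linarith
        rw [this]; exact measurableSet_Icc
      · have : {y : ℝ | 0 ≤ x ∧ 0 ≤ y ∧ x + y ≤ c} = (∅ : Set ℝ) := by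
          ext y; simp [hx]
        rw [this]; exact MeasurableSet.empty
    rw [← integral_indicator hset]
    exact congrArg _ (funext fun y => by simp [Set.indicator_apply, hV])
  simp only [hslice]
  have hvan : ∀ x : ℝ, x ∉ Icc (0:ℝ) c →
      (∫ y in {y : ℝ | 0 ≤ x ∧ 0 ≤ y ∧ x + y ≤ c}, h (x, y)) = 0 := by
    intro x hx
    rw [mem_Icc, not_and_or] at hx
    have : {y : ℝ | 0 ≤ x ∧ 0 ≤ y ∧ x + y ≤ c} = (∅ : Set ℝ) := by
      ext y; simp only [mem_setOf_eq, mem_empty_iff_false, iff_false, not_and]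
      intro h1 h2
      rcases hx with hx | hx
      · exact absurd h1 hx
      · push_neg at hx; linarith
    rw [this]; simp
  rw [← setIntegral_eq_integral_of_forall_compl_eq_zero (fun x hx => hvan x hx),
    integral_Icc_eq_integral_Ioc, ← intervalIntegral.integral_of_le hc]
  refine intervalIntegral.integral_congr fun x hx => ?_
  rw [uIcc_of_le hc] at hx
  have hx0 : 0 ≤ x := hx.1
  have hxc : x ≤ c := hx.2
  have : {y : ℝ | 0 ≤ x ∧ 0 ≤ y ∧ x + y ≤ c} = Icc 0 (c - x) := by
    ext y; simp [hx0]; intro _; constructor <;> intro <;> linarith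
  rw [this, slice1 (c - x) (by linarith)]

lemma L3 (h : ℝ × ℝ × ℝ → ℝ) (hh : Continuous h) :
    (∫ p in {p : ℝ × ℝ × ℝ | 0 ≤ p.1 ∧ 0 ≤ p.2.1 ∧ 0 ≤ p.2.2 ∧ p.1 + p.2.1 + p.2.2 ≤ 1}, h p)
      = ∫ a in (0:ℝ)..1, ∫ b in (0:ℝ)..(1-a), ∫ c in (0:ℝ)..(1-a-b), h (a, b, c) := by
  set V : Set (ℝ × ℝ × ℝ) :=
    {p : ℝ × ℝ × ℝ | 0 ≤ p.1 ∧ 0 ≤ p.2.1 ∧ 0 ≤ p.2.2 ∧ p.1 + p.2.1 + p.2.2 ≤ 1} with hV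
  have hVcl : IsClosed V := by
    have : V = {p : ℝ × ℝ × ℝ | 0 ≤ p.1} ∩ ({p : ℝ × ℝ × ℝ | 0 ≤ p.2.1} ∩
        ({p : ℝ × ℝ × ℝ | 0 ≤ p.2.2} ∩ {p : ℝ × ℝ × ℝ | p.1 + p.2.1 + p.2.2 ≤ 1})) := by
      ext p; simp [hV, and_assoc]
    rw [this]
    have c1 : Continuous fun p : ℝ × ℝ × ℝ => p.1 := continuous_fst
    have c2 : Continuous fun p : ℝ × ℝ × ℝ => p.2.1 := continuous_fst.comp continuous_snd
    have c3 : Continuous fun p : ℝ × ℝ × ℝ => p.2.2 := continuous_snd.comp continuous_snd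
    exact (isClosed_le continuous_const c1).inter ((isClosed_le continuous_const c2).inter
      ((isClosed_le continuous_const c3).inter (isClosed_le (by fun_prop) continuous_const)))
  have hVm : MeasurableSet V := hVcl.measurableSet
  have hVc : IsCompact V := by
    refine (isCompact_Icc (a := ((0:ℝ),(0:ℝ),(0:ℝ))) (b := ((1:ℝ),(1:ℝ),(1:ℝ)))).of_isClosed_subset
      hVcl ?_
    rintro ⟨x, y, z⟩ ⟨h1, h2, h3, h4⟩
    dsimp only at h1 h2 h3 h4
    exact ⟨⟨h1, h2, h3⟩, ⟨by dsimp only; linarith, by dsimp only; linarith,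
      by dsimp only; linarith⟩⟩
  have hint : IntegrableOn h V := hh.continuousOn.integrableOn_compact hVc
  rw [← integral_indicator hVm]
  have : (∫ p : ℝ × ℝ × ℝ, V.indicator h p) = ∫ x : ℝ, ∫ q : ℝ × ℝ, V.indicator h (x, q) :=
    MeasureTheory.integral_prod _ ((integrable_indicator_iff hVm).2 hint)
  rw [this]
  have hslice : ∀ x : ℝ, (∫ q : ℝ × ℝ, V.indicator h (x, q))
      = ∫ q in {q : ℝ × ℝ | 0 ≤ x ∧ 0 ≤ q.1 ∧ 0 ≤ q.2 ∧ x + q.1 + q.2 ≤ 1}, h (x, q) := by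
    intro x
    have hset : MeasurableSet {q : ℝ × ℝ | 0 ≤ x ∧ 0 ≤ q.1 ∧ 0 ≤ q.2 ∧ x + q.1 + q.2 ≤ 1} := by
      by_cases hx : 0 ≤ x
      · have : {q : ℝ × ℝ | 0 ≤ x ∧ 0 ≤ q.1 ∧ 0 ≤ q.2 ∧ x + q.1 + q.2 ≤ 1}
            = {q : ℝ × ℝ | 0 ≤ q.1 ∧ 0 ≤ q.2 ∧ q.1 + q.2 ≤ 1 - x} := by
          ext q; simp [hx]; intro _ _; constructor <;> intro <;> linarith
        rw [this]
        have : IsClosed {q : ℝ × ℝ | 0 ≤ q.1 ∧ 0 ≤ q.2 ∧ q.1 + q.2 ≤ 1 - x} := by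
          have : {q : ℝ × ℝ | 0 ≤ q.1 ∧ 0 ≤ q.2 ∧ q.1 + q.2 ≤ 1 - x}
              = {q : ℝ × ℝ | 0 ≤ q.1} ∩ ({q : ℝ × ℝ | 0 ≤ q.2} ∩
                {q : ℝ × ℝ | q.1 + q.2 ≤ 1 - x}) := by ext q; simp [and_assoc]
          rw [this]
          exact (isClosed_le continuous_const continuous_fst).inter
            ((isClosed_le continuous_const continuous_snd).inter
              (isClosed_le (continuous_fst.add continuous_snd) continuous_const))
        exact this.measurableSet
      · have : {q : ℝ × ℝ | 0 ≤ x ∧ 0 ≤ q.1 ∧ 0 ≤ q.2 ∧ x + q.1 + q.2 ≤ 1} = (∅ : Set (ℝ × ℝ)) := by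
          ext q; simp [hx]
        rw [this]; exact MeasurableSet.empty
    rw [← integral_indicator hset]
    exact congrArg _ (funext fun q => by simp [Set.indicator_apply, hV, and_assoc])
  simp only [hslice]
  have hvan : ∀ x : ℝ, x ∉ Icc (0:ℝ) 1 →
      (∫ q in {q : ℝ × ℝ | 0 ≤ x ∧ 0 ≤ q.1 ∧ 0 ≤ q.2 ∧ x + q.1 + q.2 ≤ 1}, h (x, q)) = 0 := by
    intro x hx
    rw [mem_Icc, not_and_or] at hx
    have : {q : ℝ × ℝ | 0 ≤ x ∧ 0 ≤ q.1 ∧ 0 ≤ q.2 ∧ x + q.1 + q.2 ≤ 1} = (∅ : Set (ℝ × ℝ)) := by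
      ext q; simp only [mem_setOf_eq, mem_empty_iff_false, iff_false, not_and]
      intro h1 h2 h3
      rcases hx with hx | hx
      · exact absurd h1 hx
      · push_neg at hx; linarith
    rw [this]; simp
  rw [← setIntegral_eq_integral_of_forall_compl_eq_zero (fun x hx => hvan x hx),
    integral_Icc_eq_integral_Ioc, ← intervalIntegral.integral_of_le (zero_le_one)]
  refine intervalIntegral.integral_congr fun x hx => ?_
  rw [uIcc_of_le zero_le_one] at hx
  have hx0 : 0 ≤ x := hx.1
  have hx1 : x ≤ 1 := hx.2
  have hseteq : {q : ℝ × ℝ | 0 ≤ x ∧ 0 ≤ q.1 ∧ 0 ≤ q.2 ∧ x + q.1 + q.2 ≤ 1}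
      = {q : ℝ × ℝ | 0 ≤ q.1 ∧ 0 ≤ q.2 ∧ q.1 + q.2 ≤ 1 - x} := by
    ext q; simp [hx0]; intro _ _; constructor <;> intro <;> linarith
  rw [hseteq, L2 (fun q => h (x, q)) (hh.comp (by fun_prop)) (1 - x) (by linarith)]

noncomputable def tripleEquiv : (ℝ × ℝ × ℝ) ≃ᵐ (Fin 3 → ℝ) :=
  ((MeasurableEquiv.refl ℝ).prodCongr (MeasurableEquiv.finTwoArrow).symm).trans
    (MeasurableEquiv.piFinSuccAbove (fun _ : Fin 3 => ℝ) 0).symm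

lemma tripleEquiv_measurePreserving : MeasurePreserving tripleEquiv := by
  have h1 : MeasurePreserving (MeasurableEquiv.piFinSuccAbove (fun _ : Fin 3 => ℝ) 0).symm :=
    (volume_preserving_piFinSuccAbove (fun _ : Fin 3 => ℝ) 0).symm
  have h2 : MeasurePreserving
      ((MeasurableEquiv.refl ℝ).prodCongr (MeasurableEquiv.finTwoArrow (α := ℝ)).symm) :=
    (MeasurePreserving.id _).prod (volume_preserving_finTwoArrow ℝ).symm
  exact h1.comp h2

lemma tripleEquiv_apply (p : ℝ × ℝ × ℝ) : tripleEquiv p = ![p.1, p.2.1, p.2.2] := by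
  show (MeasurableEquiv.piFinSuccAbove (fun _ : Fin 3 => ℝ) 0).symm
    (p.1, (MeasurableEquiv.finTwoArrow (α := ℝ)).symm p.2) = _
  rw [MeasurableEquiv.piFinSuccAbove_symm_apply]
  funext i
  fin_cases i <;>
    simp [MeasurableEquiv.finTwoArrow, Fin.insertNth_zero] <;> rfl

def simS : Set (Fin 3 → ℝ) := {y | 0 ≤ y 0 ∧ 0 ≤ y 1 ∧ 0 ≤ y 2 ∧ y 0 + y 1 + y 2 ≤ 1}

lemma tripleEquiv_preimage :
    tripleEquiv ⁻¹' simS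
      = {p : ℝ × ℝ × ℝ | 0 ≤ p.1 ∧ 0 ≤ p.2.1 ∧ 0 ≤ p.2.2 ∧ p.1 + p.2.1 + p.2.2 ≤ 1} := by
  ext p
  simp [simS, tripleEquiv_apply]

lemma simS_integral (g : (Fin 3 → ℝ) → ℝ) (hg : Continuous g) :
    (∫ y in simS, g y)
      = ∫ a in (0:ℝ)..1, ∫ b in (0:ℝ)..(1-a), ∫ c in (0:ℝ)..(1-a-b), g ![a, b, c] := by
  rw [← tripleEquiv_measurePreserving.setIntegral_preimage_emb
    tripleEquiv.measurableEmbedding g simS, tripleEquiv_preimage]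
  simp only [tripleEquiv_apply]
  have hcont : Continuous fun p : ℝ × ℝ × ℝ => (![p.1, p.2.1, p.2.2] : Fin 3 → ℝ) := by
    refine continuous_pi fun i => ?_
    fin_cases i <;> simp <;> fun_prop
  rw [L3 (fun p => g ![p.1, p.2.1, p.2.2]) (hg.comp hcont)]

/-- Cell 𝒫₃ of the bcc honeycomb: the tetrahedron with vertices
(1/2,1/2,1/2), (1/2,-1/2,1/2), (1,0,0), (1,0,1/2). -/
noncomputable def tetCell : Set (Fin 3 → ℝ) :=
  convexHull ℝ {![1/2, 1/2, 1/2], ![1/2, -1/2, 1/2], ![1, 0, 0], ![1, 0, 1/2]}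

/-- Centroid of the tetrahedron: its integral divided by its volume 1/24. -/
noncomputable def tetCentroid : Fin 3 → ℝ := (24 : ℝ) • ∫ x in tetCell, x

noncomputable def Mmat : Matrix (Fin 3) (Fin 3) ℝ := !![0, 1/2, 1/2; -1, -1/2, -1/2; 0, -1/2, 0]
noncomputable def Nmat : Matrix (Fin 3) (Fin 3) ℝ := !![-1, -1, 0; 0, 0, -2; 2, 0, 2]

noncomputable def Mlin : (Fin 3 → ℝ) →ₗ[ℝ] (Fin 3 → ℝ) := Matrix.toLin' Mmat
noncomputable def Mclm : (Fin 3 → ℝ) →L[ℝ] (Fin 3 → ℝ) := Mlin.toContinuousLinearMap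
noncomputable def tetMap : (Fin 3 → ℝ) → (Fin 3 → ℝ) := fun y => ![1/2, 1/2, 1/2] + Mclm y

lemma NM : Nmat * Mmat = 1 := by
  ext i j
  fin_cases i <;> fin_cases j <;>
    norm_num [Mmat, Nmat, Matrix.mul_apply, Fin.sum_univ_three, Matrix.vecHead, Matrix.vecTail, Matrix.one_apply, Fin.ext_iff, Matrix.cons_val_two]

lemma Mclm_inj : Function.Injective Mclm := by
  intro y1 y2 h
  have h2 : Matrix.toLin' Nmat (Mclm y1) = Matrix.toLin' Nmat (Mclm y2) := by rw [h]
  have key : ∀ y : Fin 3 → ℝ, Matrix.toLin' Nmat (Mclm y) = y := by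
    intro y
    show Matrix.toLin' Nmat (Matrix.toLin' Mmat y) = y
    rw [Matrix.toLin'_apply, Matrix.toLin'_apply, Matrix.mulVec_mulVec, NM, Matrix.one_mulVec]
  rwa [key, key] at h2

lemma tetMap_inj : Function.Injective tetMap := by
  intro y1 y2 h
  unfold tetMap at h
  exact Mclm_inj (add_left_cancel h)

lemma Mclm_det : (Mclm : (Fin 3 → ℝ) →L[ℝ] (Fin 3 → ℝ)).det = 1/4 := by
  show LinearMap.det (Mclm : (Fin 3 → ℝ) →ₗ[ℝ] (Fin 3 → ℝ)) = 1/4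
  rw [show (Mclm : (Fin 3 → ℝ) →ₗ[ℝ] (Fin 3 → ℝ)) = Mlin from
    LinearMap.coe_toContinuousLinearMap Mlin]
  rw [Mlin, LinearMap.det_toLin', Matrix.det_fin_three]
  norm_num [Mmat, Matrix.vecHead, Matrix.vecTail, Matrix.cons_val_two]

lemma simS_eq_hull :
    simS = convexHull ℝ ({![0,0,0], ![1,0,0], ![0,1,0], ![0,0,1]} : Set (Fin 3 → ℝ)) := by
  apply le_antisymm
  · intro y hy
    obtain ⟨h0, h1, h2, hs⟩ := hy
    have hmem : ∀ i : Fin 4,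
        (![![0,0,0], ![1,0,0], ![0,1,0], ![0,0,1]] : Fin 4 → (Fin 3 → ℝ)) i ∈
          ({![0,0,0], ![1,0,0], ![0,1,0], ![0,0,1]} : Set (Fin 3 → ℝ)) := by
      intro i; fin_cases i <;> simp
    have := Finset.centerMass_mem_convexHull (t := (Finset.univ : Finset (Fin 4)))
      (w := ![1 - (y 0 + y 1 + y 2), y 0, y 1, y 2])
      (z := ![![0,0,0], ![1,0,0], ![0,1,0], ![0,0,1]])
      (fun i _ => by fin_cases i <;> simp <;> linarith)
      (by simp [Fin.sum_univ_four]; linarith)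
      (fun i _ => hmem i)
    convert this using 1
    rw [Finset.centerMass_eq_of_sum_1]
    · funext j
      fin_cases j <;>
        norm_num [Fin.sum_univ_four, Matrix.vecHead, Matrix.vecTail, Pi.add_apply,
          Pi.smul_apply, Matrix.cons_val_two, Matrix.cons_val_three] <;> rfl
    · simp [Fin.sum_univ_four]; ring
  · apply convexHull_min
    · intro v hv
      rcases hv with h | h | h | h <;> subst h <;>
        refine ⟨by norm_num [Matrix.cons_val_two], by norm_num [Matrix.cons_val_two], by norm_num [Matrix.cons_val_two], by norm_num [Matrix.cons_val_two]⟩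
    · intro x hx y hy a b ha hb hab
      obtain ⟨hx0, hx1, hx2, hxs⟩ := hx
      obtain ⟨hy0, hy1, hy2, hys⟩ := hy
      refine ⟨?_, ?_, ?_, ?_⟩ <;> simp only [Pi.add_apply, Pi.smul_apply, smul_eq_mul]
      · have := add_nonneg (mul_nonneg ha hx0) (mul_nonneg hb hy0); linarith
      · have := add_nonneg (mul_nonneg ha hx1) (mul_nonneg hb hy1); linarith
      · have := add_nonneg (mul_nonneg ha hx2) (mul_nonneg hb hy2); linarith
      · nlinarith

lemma tetCell_eq_image : tetCell = tetMap '' simS := by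
  have haff : ∃ f : (Fin 3 → ℝ) →ᵃ[ℝ] (Fin 3 → ℝ), ⇑f = tetMap := by
    refine ⟨⟨tetMap, Mlin, fun p v => ?_⟩, rfl⟩
    show (![1/2, 1/2, 1/2] : Fin 3 → ℝ) + Mclm (v + p) = Mlin v + (![1/2, 1/2, 1/2] + Mclm p)
    have : Mclm (v + p) = Mclm v + Mclm p := map_add _ _ _
    rw [this]
    show _ = Mclm v + _
    abel
  obtain ⟨f, hf⟩ := haff
  rw [← hf, simS_eq_hull, AffineMap.image_convexHull]
  unfold tetCell
  congr 1
  have heval : ∀ v : Fin 3 → ℝ, f v = ![1/2, 1/2, 1/2] + Matrix.mulVec Mmat v := by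
    intro v; rw [hf]; rfl
  rw [Set.image_insert_eq, Set.image_insert_eq, Set.image_insert_eq, Set.image_singleton]
  have e0 : f ![0,0,0] = ![1/2, 1/2, 1/2] := by
    rw [heval]; funext j; fin_cases j <;>
      norm_num [Matrix.mulVec, dotProduct, Fin.sum_univ_three, Mmat,
        Matrix.vecHead, Matrix.vecTail, Matrix.cons_val_two]
  have e1 : f ![1,0,0] = ![1/2, -1/2, 1/2] := by
    rw [heval]; funext j; fin_cases j <;>
      norm_num [Matrix.mulVec, dotProduct, Fin.sum_univ_three, Mmat,
        Matrix.vecHead, Matrix.vecTail, Matrix.cons_val_two]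
  have e2 : f ![0,1,0] = ![1, 0, 0] := by
    rw [heval]; funext j; fin_cases j <;>
      norm_num [Matrix.mulVec, dotProduct, Fin.sum_univ_three, Mmat,
        Matrix.vecHead, Matrix.vecTail, Matrix.cons_val_two]
  have e3 : f ![0,0,1] = ![1, 0, 1/2] := by
    rw [heval]; funext j; fin_cases j <;>
      norm_num [Matrix.mulVec, dotProduct, Fin.sum_univ_three, Mmat,
        Matrix.vecHead, Matrix.vecTail, Matrix.cons_val_two]
  rw [e0, e1, e2, e3]

lemma simS_measurable : MeasurableSet simS := by
  have : IsClosed simS := by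
    have : simS = {y : Fin 3 → ℝ | 0 ≤ y 0} ∩ ({y : Fin 3 → ℝ | 0 ≤ y 1} ∩
        ({y : Fin 3 → ℝ | 0 ≤ y 2} ∩ {y : Fin 3 → ℝ | y 0 + y 1 + y 2 ≤ 1})) := by
      ext y; simp [simS, and_assoc]
    rw [this]
    exact (isClosed_le continuous_const (continuous_apply 0)).inter
      ((isClosed_le continuous_const (continuous_apply 1)).inter
        ((isClosed_le continuous_const (continuous_apply 2)).inter
          (isClosed_le (by fun_prop) continuous_const)))
  exact this.measurableSet

lemma tetMap_apply (a b c : ℝ) :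
    tetMap ![a, b, c] = ![1/2 + b/2 + c/2, 1/2 - a - b/2 - c/2, 1/2 - b/2] := by
  funext j
  have : tetMap ![a,b,c] j = (![1/2, 1/2, 1/2] : Fin 3 → ℝ) j
      + Matrix.mulVec Mmat ![a,b,c] j := rfl
  rw [this]
  fin_cases j <;>
    norm_num [Matrix.mulVec, dotProduct, Fin.sum_univ_three, Mmat,
      Matrix.vecHead, Matrix.vecTail, Matrix.cons_val_two] <;> ring

lemma tet_int (g : (Fin 3 → ℝ) → ℝ) (hg : Continuous g) :
    (∫ x in tetCell, g x)
      = ∫ a in (0:ℝ)..1, ∫ b in (0:ℝ)..(1-a), ∫ c in (0:ℝ)..(1-a-b),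
          (1/4) * g ![1/2 + b/2 + c/2, 1/2 - a - b/2 - c/2, 1/2 - b/2] := by
  have hderiv : ∀ y ∈ simS, HasFDerivWithinAt tetMap Mclm simS y := fun y _ =>
    ((Mclm.hasFDerivAt).const_add _).hasFDerivWithinAt
  rw [tetCell_eq_image,
    integral_image_eq_integral_abs_det_fderiv_smul volume simS_measurable hderiv
      tetMap_inj.injOn g]
  have heq : ∀ y : Fin 3 → ℝ, |Mclm.det| • g (tetMap y) = (1/4) * g (tetMap y) := by
    intro y
    rw [Mclm_det, smul_eq_mul]
    norm_num
  simp only [heq]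
  have htm : Continuous tetMap := by
    unfold tetMap
    exact continuous_const.add Mclm.continuous
  rw [simS_integral (fun y => (1/4) * g (tetMap y)) (by fun_prop)]
  simp only [tetMap_apply]

lemma tetI_one : (∫ x in tetCell, (1:ℝ)) = 1/24 := by
  rw [tet_int (fun _ => (1:ℝ)) (by fun_prop)]
  refine Eq.trans (intervalIntegral.integral_congr
    (g := fun a : ℝ => (1/8) + (-1/4)*a + (1/8)*a^2 + (0)*a^3 + (0)*a^4) fun a ha => ?_) (by rw [ipoly]; norm_num)
  dsimp only
  refine Eq.trans (intervalIntegral.integral_congr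
    (g := fun b : ℝ => (1/4 - a/4) + (-1/4)*b + (0)*b^2 + (0)*b^3 + (0)*b^4) fun b hb => ?_) (by rw [ipoly]; ring)
  dsimp only
  refine Eq.trans (intervalIntegral.integral_congr
    (g := fun t : ℝ => (1/4) + (0)*t + (0)*t^2 + (0)*t^3 + (0)*t^4) fun t ht => ?_) (by rw [ipoly]; ring)
  dsimp only
  try simp only [Matrix.cons_val_zero, Matrix.cons_val_one, Matrix.cons_val_two, Matrix.head_cons, Matrix.tail_cons]
  ring

lemma tetI_x0 : (∫ x in tetCell, x 0) = 1/32 := by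
  rw [tet_int (fun x : Fin 3 → ℝ => x 0) (by fun_prop)]
  refine Eq.trans (intervalIntegral.integral_congr
    (g := fun a : ℝ => (5/48) + (-1/4)*a + (3/16)*a^2 + (-1/24)*a^3 + (0)*a^4) fun a ha => ?_) (by rw [ipoly]; norm_num)
  dsimp only
  refine Eq.trans (intervalIntegral.integral_congr
    (g := fun b : ℝ => (3/16 - a/4 + a^2/16) + (-1/8)*b + (-1/16)*b^2 + (0)*b^3 + (0)*b^4) fun b hb => ?_) (by rw [ipoly]; ring)
  dsimp only
  refine Eq.trans (intervalIntegral.integral_congr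
    (g := fun t : ℝ => (1/8 + b/8) + (1/8)*t + (0)*t^2 + (0)*t^3 + (0)*t^4) fun t ht => ?_) (by rw [ipoly]; ring)
  dsimp only
  try simp only [Matrix.cons_val_zero, Matrix.cons_val_one, Matrix.cons_val_two, Matrix.head_cons, Matrix.tail_cons]
  ring

lemma tetI_x1 : (∫ x in tetCell, x 1) = 0 := by
  rw [tet_int (fun x : Fin 3 → ℝ => x 1) (by fun_prop)]
  refine Eq.trans (intervalIntegral.integral_congr
    (g := fun a : ℝ => (1/48) + (-1/8)*a + (3/16)*a^2 + (-1/12)*a^3 + (0)*a^4) fun a ha => ?_) (by rw [ipoly]; norm_num)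
  dsimp only
  refine Eq.trans (intervalIntegral.integral_congr
    (g := fun b : ℝ => (1/16 - a/4 + 3/16*a^2) + (-1/8 + a/4)*b + (1/16)*b^2 + (0)*b^3 + (0)*b^4) fun b hb => ?_) (by rw [ipoly]; ring)
  dsimp only
  refine Eq.trans (intervalIntegral.integral_congr
    (g := fun t : ℝ => (1/8 - b/8 - a/4) + (-1/8)*t + (0)*t^2 + (0)*t^3 + (0)*t^4) fun t ht => ?_) (by rw [ipoly]; ring)
  dsimp only
  try simp only [Matrix.cons_val_zero, Matrix.cons_val_one, Matrix.cons_val_two, Matrix.head_cons, Matrix.tail_cons]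
  ring

lemma tetI_x2 : (∫ x in tetCell, x 2) = 1/64 := by
  rw [tet_int (fun x : Fin 3 → ℝ => x 2) (by fun_prop)]
  refine Eq.trans (intervalIntegral.integral_congr
    (g := fun a : ℝ => (1/24) + (-1/16)*a + (0)*a^2 + (1/48)*a^3 + (0)*a^4) fun a ha => ?_) (by rw [ipoly]; norm_num)
  dsimp only
  refine Eq.trans (intervalIntegral.integral_congr
    (g := fun b : ℝ => (1/8 - a/8) + (-1/4 + a/8)*b + (1/8)*b^2 + (0)*b^3 + (0)*b^4) fun b hb => ?_) (by rw [ipoly]; ring)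
  dsimp only
  refine Eq.trans (intervalIntegral.integral_congr
    (g := fun t : ℝ => (1/8 - b/8) + (0)*t + (0)*t^2 + (0)*t^3 + (0)*t^4) fun t ht => ?_) (by rw [ipoly]; ring)
  dsimp only
  try simp only [Matrix.cons_val_zero, Matrix.cons_val_one, Matrix.cons_val_two, Matrix.head_cons, Matrix.tail_cons]
  ring

lemma tetI_Q : (∫ x in tetCell, ((x 0 - 3/4)^2 + (x 1)^2 + (x 2 - 3/8)^2)) = 1/512 := by
  rw [tet_int (fun x : Fin 3 → ℝ => (x 0 - 3/4)^2 + (x 1)^2 + (x 2 - 3/8)^2) (by fun_prop)]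
  refine Eq.trans (intervalIntegral.integral_congr
    (g := fun a : ℝ => (5/512) + (-17/256)*a + (93/512)*a^2 + (-13/64)*a^3 + (5/64)*a^4) fun a ha => ?_) (by rw [ipoly]; norm_num)
  dsimp only
  refine Eq.trans (intervalIntegral.integral_congr
    (g := fun b : ℝ => (23/768 - 37/256*a + 9/32*a^2 - 1/6*a^3) + (-29/256 + 9/32*a - 1/4*a^2)*b + (3/16 - 3/16*a)*b^2 + (-5/48)*b^3 + (0)*b^4) fun b hb => ?_) (by rw [ipoly]; ring)
  dsimp only
  refine Eq.trans (intervalIntegral.integral_congr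
    (g := fun t : ℝ => (21/256 - 7/32*b + 3/16*b^2 - 1/4*a + 1/4*a*b + 1/4*a^2) + (-3/16 + 1/4*b + 1/4*a)*t + (1/8)*t^2 + (0)*t^3 + (0)*t^4) fun t ht => ?_) (by rw [ipoly]; ring)
  dsimp only
  try simp only [Matrix.cons_val_zero, Matrix.cons_val_one, Matrix.cons_val_two, Matrix.head_cons, Matrix.tail_cons]
  ring

lemma tetCell_compact : IsCompact tetCell :=
  (Set.toFinite _).isCompact_convexHull ℝ

lemma tetCell_volume : volume tetCell = ENNReal.ofReal (1 / 24) := by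
  have hne : volume tetCell ≠ ⊤ := tetCell_compact.measure_lt_top.ne
  have h1 : (∫ x in tetCell, (1:ℝ)) = (volume tetCell).toReal := by
    rw [setIntegral_const]; simp [Measure.real]
  rw [tetI_one] at h1
  rw [← ENNReal.ofReal_toReal hne, ← h1]

lemma tetCell_integrable : IntegrableOn (fun x : Fin 3 → ℝ => x) tetCell volume :=
  continuousOn_id.integrableOn_compact tetCell_compact

lemma tetCentroid_apply (i : Fin 3) :
    tetCentroid i = 24 * ∫ x in tetCell, x i := by
  have := (ContinuousLinearMap.proj (R := ℝ) (φ := fun _ : Fin 3 => ℝ) i).integral_comp_comm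
    tetCell_integrable
  unfold tetCentroid
  rw [Pi.smul_apply, smul_eq_mul]
  congr 1
  exact (this.symm : _)

lemma tetCentroid_0 : tetCentroid 0 = 3/4 := by
  rw [tetCentroid_apply, tetI_x0]; norm_num

lemma tetCentroid_1 : tetCentroid 1 = 0 := by
  rw [tetCentroid_apply, tetI_x1]; norm_num

lemma tetCentroid_2 : tetCentroid 2 = 3/8 := by
  rw [tetCentroid_apply, tetI_x2]; norm_num

/-- The tetrahedron has volume 1/24 and second moment about its centroid 1/512. -/
theorem tet_volume_and_moment :
    volume tetCell = ENNReal.ofReal (1 / 24) ∧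
    (∫ x in tetCell, ∑ i, (x i - tetCentroid i) ^ 2) = 1 / 512 := by
  constructor
  · exact tetCell_volume
  · have : ∀ x : Fin 3 → ℝ, (∑ i, (x i - tetCentroid i) ^ 2)
        = (x 0 - 3/4)^2 + (x 1)^2 + (x 2 - 3/8)^2 := by
      intro x
      rw [Fin.sum_univ_three, tetCentroid_0, tetCentroid_1, tetCentroid_2, sub_zero]
    simp only [this]
    exact tetI_Q
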